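/- Let σ > 1 and n ∈ ℕ with n > σ + 1. There exists C > 0 such that for every g ∈ L²(ℝ) the function B g(k) = ∫_ℝ g(ℓ) / ((1 + |k−ℓ|^n)(1+|ℓ|)) dℓ satisfies ∫_ℝ (1+|k|²)^σ |Bg(k)|² dk ≤ C ( ‖g‖_{L²}² + ∫_ℝ (1+|ℓ|²)^{σ−1} |g(ℓ)|² dℓ ). -/

import Mathlib

open Real MeasureTheory
open scoped ENNReal

/-- Peetre-type pointwise inequality. -/
lemma stmt17_peetre {σ : ℝ} (hσ : 1 < σ) (k l : ℝ) :
    (1 + k ^ 2) ^ (σ / 2) ≤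
      2 ^ (σ / 2) * (1 + (k - l) ^ 2) ^ (σ / 2) *
        ((1 + |l|) * (1 + l ^ 2) ^ ((σ - 1) / 2)) := by
  have hσ0 : (0 : ℝ) < σ := by linarith
  have hb : (1 : ℝ) + k ^ 2 ≤ 2 * (1 + (k - l) ^ 2) * (1 + l ^ 2) := by
    nlinarith [sq_nonneg (k - 2 * l), sq_nonneg ((k - l) * l)]
  have h1 : (1 + k ^ 2) ^ (σ / 2) ≤ (2 * (1 + (k - l) ^ 2) * (1 + l ^ 2)) ^ (σ / 2) :=
    Real.rpow_le_rpow (by positivity) hb (by positivity)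
  have h2 : (2 * (1 + (k - l) ^ 2) * (1 + l ^ 2)) ^ (σ / 2)
      = 2 ^ (σ / 2) * (1 + (k - l) ^ 2) ^ (σ / 2) * (1 + l ^ 2) ^ (σ / 2) := by
    rw [Real.mul_rpow (by positivity) (by positivity),
      Real.mul_rpow (by positivity) (by positivity)]
  have h3 : (1 + l ^ 2) ^ (σ / 2)
      = (1 + l ^ 2) ^ ((1 : ℝ) / 2) * (1 + l ^ 2) ^ ((σ - 1) / 2) := by
    rw [← Real.rpow_add (by positivity)]
    ring_nf
  have h4 : (1 + l ^ 2) ^ ((1 : ℝ) / 2) ≤ 1 + |l| := by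
    have habs : (1 : ℝ) + l ^ 2 ≤ (1 + |l|) ^ 2 := by
      have := abs_nonneg l
      nlinarith [sq_abs l]
    have h5 : ((1 + |l|) ^ 2 : ℝ) ^ ((1 : ℝ) / 2) = 1 + |l| := by
      rw [← Real.rpow_natCast (1 + |l|) 2, ← Real.rpow_mul (by positivity),
        show ((2:ℕ):ℝ) * ((1:ℝ)/2) = 1 by push_cast; ring, Real.rpow_one]
    calc (1 + l ^ 2) ^ ((1 : ℝ) / 2) ≤ ((1 + |l|) ^ 2 : ℝ) ^ ((1 : ℝ) / 2) :=
          Real.rpow_le_rpow (by positivity) habs (by norm_num)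
      _ = 1 + |l| := h5
  calc (1 + k ^ 2) ^ (σ / 2)
      ≤ 2 ^ (σ / 2) * (1 + (k - l) ^ 2) ^ (σ / 2) * (1 + l ^ 2) ^ (σ / 2) := by
        rw [← h2]; exact h1
    _ = 2 ^ (σ / 2) * (1 + (k - l) ^ 2) ^ (σ / 2) *
        ((1 + l ^ 2) ^ ((1 : ℝ) / 2) * (1 + l ^ 2) ^ ((σ - 1) / 2)) := by rw [← h3]
    _ ≤ 2 ^ (σ / 2) * (1 + (k - l) ^ 2) ^ (σ / 2) *
        ((1 + |l|) * (1 + l ^ 2) ^ ((σ - 1) / 2)) := by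
        gcongr

/-- The weighted-kernel pointwise bound. -/
lemma stmt17_ptbound {σ : ℝ} (hσ : 1 < σ) (n : ℕ) (k l : ℝ) {t : ℝ} (ht : 0 ≤ t) :
    (1 + k ^ 2) ^ (σ / 2) * (t / ((1 + |k - l| ^ n) * (1 + |l|))) ≤
      (2 ^ (σ / 2) * ((1 + (k - l) ^ 2) ^ (σ / 2) / (1 + |k - l| ^ n))) *
        ((1 + l ^ 2) ^ ((σ - 1) / 2) * t) := by
  have hP : (0 : ℝ) < 1 + |k - l| ^ n := by positivity
  have hQ : (0 : ℝ) < 1 + |l| := by positivity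
  have key := stmt17_peetre hσ k l
  calc (1 + k ^ 2) ^ (σ / 2) * (t / ((1 + |k - l| ^ n) * (1 + |l|)))
      ≤ (2 ^ (σ / 2) * (1 + (k - l) ^ 2) ^ (σ / 2) *
          ((1 + |l|) * (1 + l ^ 2) ^ ((σ - 1) / 2))) *
          (t / ((1 + |k - l| ^ n) * (1 + |l|))) := by
        gcongr
    _ = (2 ^ (σ / 2) * ((1 + (k - l) ^ 2) ^ (σ / 2) / (1 + |k - l| ^ n))) *
        ((1 + l ^ 2) ^ ((σ - 1) / 2) * t) := by
        field_simp

/-- Integrability of the weighted kernel. -/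
lemma stmt17_ker_finite {σ : ℝ} (hσ : 1 < σ) {n : ℕ} (hn : σ + 1 < (n : ℝ)) :
    (∫⁻ x : ℝ, ENNReal.ofReal (2 ^ (σ / 2) * ((1 + x ^ 2) ^ (σ / 2) / (1 + |x| ^ n)))) < ⊤ := by
  have hσ0 : (0 : ℝ) < σ := by linarith
  set c : ℝ := 2 ^ (σ / 2) * 2 ^ n with hc
  have hcpos : 0 < c := by positivity
  -- the comparison function
  have hint : Integrable (fun x : ℝ => c * (1 + |x|) ^ (-((n : ℝ) - σ))) volume := by
    have h := (integrable_one_add_norm (E := ℝ) (μ := volume)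
      (r := (n : ℝ) - σ) (by simp [Module.finrank_self]; linarith)).const_mul c
    simpa [Real.norm_eq_abs] using h
  -- pointwise bound
  have hpt : ∀ x : ℝ, 2 ^ (σ / 2) * ((1 + x ^ 2) ^ (σ / 2) / (1 + |x| ^ n))
      ≤ c * (1 + |x|) ^ (-((n : ℝ) - σ)) := by
    intro x
    have hB : (0 : ℝ) < 1 + |x| := by positivity
    have h1 : (1 + x ^ 2) ^ (σ / 2) ≤ (1 + |x|) ^ σ := by
      have hb : (1 : ℝ) + x ^ 2 ≤ (1 + |x|) ^ 2 := by nlinarith [abs_nonneg x, sq_abs x]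
      have h5 : (((1 + |x|) ^ 2 : ℝ)) ^ (σ / 2) = (1 + |x|) ^ σ := by
        rw [← Real.rpow_natCast (1 + |x|) 2, ← Real.rpow_mul (by positivity),
          show ((2:ℕ):ℝ) * (σ/2) = σ by push_cast; ring]
      calc (1 + x ^ 2) ^ (σ / 2) ≤ (((1 + |x|) ^ 2 : ℝ)) ^ (σ / 2) :=
            Real.rpow_le_rpow (by positivity) hb (by positivity)
        _ = (1 + |x|) ^ σ := h5
    have h2 : (1 + |x|) ^ n ≤ 2 ^ n * (1 + |x| ^ n) := by
      rcases le_total |x| 1 with h | h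
      · calc (1 + |x|) ^ n ≤ (2 : ℝ) ^ n :=
              pow_le_pow_left₀ (by positivity) (by linarith) n
          _ ≤ 2 ^ n * (1 + |x| ^ n) := by
              nlinarith [pow_pos (show (0:ℝ) < 2 by norm_num) n,
                pow_nonneg (abs_nonneg x) n]
      · have h1x : 1 + |x| ≤ 2 * |x| := by linarith
        calc (1 + |x|) ^ n ≤ (2 * |x|) ^ n :=
              pow_le_pow_left₀ (by positivity) h1x n
          _ = 2 ^ n * |x| ^ n := by rw [mul_pow]
          _ ≤ 2 ^ n * (1 + |x| ^ n) := by
              nlinarith [pow_pos (show (0:ℝ) < 2 by norm_num) n]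
    have hPn : (0 : ℝ) < 1 + |x| ^ n := by positivity
    have hBn : (0 : ℝ) < (1 + |x|) ^ n := by positivity
    have h3 : (1 + x ^ 2) ^ (σ / 2) / (1 + |x| ^ n) ≤ 2 ^ n * ((1 + |x|) ^ σ / (1 + |x|) ^ n) := by
      rw [div_le_iff₀ hPn]
      have : 2 ^ n * ((1 + |x|) ^ σ / (1 + |x|) ^ n) * (1 + |x| ^ n)
          = (1 + |x|) ^ σ * ((2 ^ n * (1 + |x| ^ n)) / (1 + |x|) ^ n) := by ring
      rw [this]
      calc (1 + x ^ 2) ^ (σ / 2) ≤ (1 + |x|) ^ σ := h1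
        _ = (1 + |x|) ^ σ * 1 := by ring
        _ ≤ (1 + |x|) ^ σ * ((2 ^ n * (1 + |x| ^ n)) / (1 + |x|) ^ n) :=
            mul_le_mul_of_nonneg_left (by rw [le_div_iff₀ hBn]; linarith) (by positivity)
    have h4 : (1 + |x|) ^ σ / (1 + |x|) ^ n = (1 + |x|) ^ (-((n : ℝ) - σ)) := by
      rw [← Real.rpow_natCast (1 + |x|) n, ← Real.rpow_sub hB,
        show σ - (n:ℝ) = -((n:ℝ) - σ) by ring]
    calc 2 ^ (σ / 2) * ((1 + x ^ 2) ^ (σ / 2) / (1 + |x| ^ n))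
        ≤ 2 ^ (σ / 2) * (2 ^ n * ((1 + |x|) ^ σ / (1 + |x|) ^ n)) := by
          gcongr
      _ = c * (1 + |x|) ^ (-((n : ℝ) - σ)) := by rw [h4, hc]; ring
  calc (∫⁻ x : ℝ, ENNReal.ofReal (2 ^ (σ / 2) * ((1 + x ^ 2) ^ (σ / 2) / (1 + |x| ^ n))))
      ≤ ∫⁻ x : ℝ, ENNReal.ofReal (c * (1 + |x|) ^ (-((n : ℝ) - σ))) :=
        lintegral_mono fun x => ENNReal.ofReal_le_ofReal (hpt x)
    _ ≤ ∫⁻ x : ℝ, ‖c * (1 + |x|) ^ (-((n : ℝ) - σ))‖ₑ :=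
        lintegral_mono fun x => Real.ofReal_le_enorm _
    _ < ⊤ := hint.hasFiniteIntegral

/-- Weighted `L²` bound for the smoothing kernel
`Bg(k) = ∫ g(ℓ)/((1+|k−ℓ|ⁿ)(1+|ℓ|)) dℓ`. -/
theorem stmt_17 (σ : ℝ) (hσ : 1 < σ) (n : ℕ) (hn : σ + 1 < (n : ℝ)) :
    ∃ C > (0:ℝ), ∀ g : ℝ → ℂ, MemLp g 2 (volume : Measure ℝ) →
      (∫⁻ k : ℝ, ENNReal.ofReal ((1 + |k| ^ 2) ^ σ *
          ‖∫ l : ℝ, g l / (((1 + |k - l| ^ n) * (1 + |l|) : ℝ) : ℂ)‖ ^ 2))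
        ≤ ENNReal.ofReal C *
            ((∫⁻ x : ℝ, ENNReal.ofReal (‖g x‖ ^ 2)) +
              ∫⁻ l : ℝ, ENNReal.ofReal ((1 + |l| ^ 2) ^ (σ - 1) * ‖g l‖ ^ 2)) := by
  have hσ0 : (0 : ℝ) < σ := by linarith
  set φ : ℝ → ℝ := fun x => 2 ^ (σ / 2) * ((1 + x ^ 2) ^ (σ / 2) / (1 + |x| ^ n)) with hφ
  have hφpos : ∀ x, 0 < φ x := fun x => by positivity
  have hφcont : Continuous φ := by
    apply Continuous.mul continuous_const
    apply Continuous.div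
    · exact (continuous_const.add (continuous_pow 2)).rpow_const
        (fun x => Or.inr (by linarith))
    · exact continuous_const.add (continuous_abs.pow n)
    · intro x; positivity
  set H : ℝ → ENNReal := fun x => ENNReal.ofReal (φ x) with hH
  have hHmeas : Measurable H := (ENNReal.continuous_ofReal.comp hφcont).measurable
  have hHne : ∀ x, H x ≠ 0 := fun x => by
    simp only [hH, ne_eq, ENNReal.ofReal_eq_zero, not_le]
    exact hφpos x
  have hHtop : ∀ x, H x ≠ ⊤ := fun x => ENNReal.ofReal_ne_top
  set I : ENNReal := ∫⁻ x, H x with hI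
  have hIlt : I < ⊤ := stmt17_ker_finite hσ hn
  refine ⟨I.toReal * I.toReal + 1, by positivity, ?_⟩
  intro g hg
  have hgm : AEMeasurable (fun l => ‖g l‖) volume := hg.1.norm.aemeasurable
  have hwm : Measurable fun l : ℝ => (1 + l ^ 2) ^ ((σ - 1) / 2) :=
    ((continuous_const.add (continuous_pow 2)).rpow_const
      (fun x => Or.inr (by linarith))).measurable
  set u : ℝ → ENNReal := fun l => ENNReal.ofReal ((1 + l ^ 2) ^ ((σ - 1) / 2) * ‖g l‖) with hu
  have hum : AEMeasurable u volume :=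
    ENNReal.measurable_ofReal.comp_aemeasurable (hwm.aemeasurable.mul hgm)
  set S : ℝ → ENNReal := fun k => ∫⁻ l, H (k - l) * u l with hS
  set T : ℝ → ENNReal := fun k => ∫⁻ l, H (k - l) * (u l * u l) with hT
  -- Step 1: pointwise bound by S k * S k
  have step1 : ∀ k : ℝ, ENNReal.ofReal ((1 + |k| ^ 2) ^ σ *
      ‖∫ l : ℝ, g l / (((1 + |k - l| ^ n) * (1 + |l|) : ℝ) : ℂ)‖ ^ 2) ≤ S k * S k := by
    intro k
    set A : ℝ := (1 + k ^ 2) ^ (σ / 2) with hA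
    have hA0 : 0 ≤ A := by positivity
    set N : ℝ := ‖∫ l : ℝ, g l / (((1 + |k - l| ^ n) * (1 + |l|) : ℝ) : ℂ)‖ with hN
    have hN0 : 0 ≤ N := norm_nonneg _
    have hnorm : ∀ l : ℝ, ‖g l / (((1 + |k - l| ^ n) * (1 + |l|) : ℝ) : ℂ)‖
        = ‖g l‖ / ((1 + |k - l| ^ n) * (1 + |l|)) := by
      intro l
      rw [norm_div, Complex.norm_real, Real.norm_eq_abs, abs_of_pos (by positivity)]
    set J : ENNReal := ∫⁻ l, ENNReal.ofReal
      ‖g l / (((1 + |k - l| ^ n) * (1 + |l|) : ℝ) : ℂ)‖ with hJ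
    have h1 : N ≤ J.toReal := norm_integral_le_lintegral_norm _
    have h2 : ENNReal.ofReal (A * N) ≤ ENNReal.ofReal A * J := by
      calc ENNReal.ofReal (A * N) ≤ ENNReal.ofReal (A * J.toReal) :=
            ENNReal.ofReal_le_ofReal (mul_le_mul_of_nonneg_left h1 hA0)
        _ = ENNReal.ofReal A * ENNReal.ofReal J.toReal := ENNReal.ofReal_mul hA0
        _ ≤ ENNReal.ofReal A * J := mul_le_mul_right ENNReal.ofReal_toReal_le _
    have h3 : ENNReal.ofReal A * J ≤ S k := by
      rw [hJ, ← lintegral_const_mul' _ _ ENNReal.ofReal_ne_top]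
      refine lintegral_mono fun l => ?_
      rw [← ENNReal.ofReal_mul hA0, hnorm l, hH, hu,
        ← ENNReal.ofReal_mul (le_of_lt (hφpos _))]
      refine ENNReal.ofReal_le_ofReal ?_
      exact stmt17_ptbound hσ n k l (norm_nonneg _)
    have hAN : (1 + |k| ^ 2) ^ σ * N ^ 2 = (A * N) * (A * N) := by
      have hA2 : A * A = (1 + k ^ 2) ^ σ := by
        rw [hA, ← Real.rpow_add (by positivity)]
        ring_nf
      rw [sq_abs, ← hA2]
      ring
    calc ENNReal.ofReal ((1 + |k| ^ 2) ^ σ * N ^ 2)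
        = ENNReal.ofReal (A * N) * ENNReal.ofReal (A * N) := by
          rw [hAN, ENNReal.ofReal_mul (by positivity)]
      _ ≤ S k * S k := mul_le_mul' (h2.trans h3) (h2.trans h3)
  have hsq : ∀ x : ENNReal, x ^ (2:ℝ) = x * x := fun x => by
    rw [show (2:ℝ) = ((2:ℕ):ℝ) by norm_num, ENNReal.rpow_natCast, sq]
  -- Step 2: Cauchy–Schwarz per k
  have step2 : ∀ k : ℝ, S k * S k ≤ I * T k := by
    intro k
    set f : ℝ → ENNReal := fun l => (H (k - l)) ^ ((1 : ℝ) / 2) with hf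
    set m : ℝ → ENNReal := fun l => (H (k - l)) ^ ((1 : ℝ) / 2) * u l with hm
    have hfmeas : Measurable f :=
      (ENNReal.continuous_rpow_const.measurable).comp
        (hHmeas.comp (measurable_const.sub measurable_id))
    have hmm : AEMeasurable m volume := hfmeas.aemeasurable.mul hum
    have hCS := ENNReal.lintegral_mul_le_Lp_mul_Lq volume
      (by constructor <;> norm_num : Real.HolderConjugate 2 2) hfmeas.aemeasurable hmm
    have hfm : ∀ l, (f * m) l = H (k - l) * u l := by
      intro l
      simp only [Pi.mul_apply, hf, hm]
      rw [← mul_assoc, ← ENNReal.rpow_add_of_nonneg _ _ (by norm_num) (by norm_num)]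
      norm_num
    have hf2 : ∀ l, f l ^ (2 : ℝ) = H (k - l) := by
      intro l
      rw [hf, hsq,
        ← ENNReal.rpow_add_of_nonneg _ _ (by norm_num : (0:ℝ) ≤ 1/2) (by norm_num : (0:ℝ) ≤ 1/2)]
      norm_num
    have hm2 : ∀ l, m l ^ (2 : ℝ) = H (k - l) * (u l * u l) := by
      intro l
      rw [hm, ENNReal.mul_rpow_of_nonneg _ _ (by norm_num : (0:ℝ) ≤ 2), hsq, hsq,
        ← ENNReal.rpow_add_of_nonneg _ _ (by norm_num : (0:ℝ) ≤ 1/2) (by norm_num : (0:ℝ) ≤ 1/2)]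
      norm_num
    have hHint : (∫⁻ l, H (k - l)) = I := by
      rw [hI]
      exact (Measure.measurePreserving_sub_left volume k).lintegral_comp hHmeas
    have hSle : S k ≤ I ^ ((1:ℝ) / 2) * (T k) ^ ((1:ℝ) / 2) := by
      calc S k = ∫⁻ l, (f * m) l := by
            rw [hS]; exact (lintegral_congr fun l => (hfm l).symm)
        _ ≤ (∫⁻ l, f l ^ (2:ℝ)) ^ ((1:ℝ)/2) * (∫⁻ l, m l ^ (2:ℝ)) ^ ((1:ℝ)/2) := hCS
        _ = I ^ ((1:ℝ) / 2) * (T k) ^ ((1:ℝ) / 2) := by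
            rw [lintegral_congr hf2, lintegral_congr hm2, hHint, hT]
    calc S k * S k ≤ (I ^ ((1:ℝ)/2) * (T k) ^ ((1:ℝ)/2)) *
          (I ^ ((1:ℝ)/2) * (T k) ^ ((1:ℝ)/2)) := mul_le_mul' hSle hSle
      _ = (I ^ ((1:ℝ)/2) * I ^ ((1:ℝ)/2)) * ((T k) ^ ((1:ℝ)/2) * (T k) ^ ((1:ℝ)/2)) := by
          ring
      _ = I * T k := by
          rw [← ENNReal.rpow_add_of_nonneg _ _ (by norm_num) (by norm_num),
            ← ENNReal.rpow_add_of_nonneg _ _ (by norm_num) (by norm_num)]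
          norm_num
  -- Step 3: integrate and use Tonelli
  have hTint : (∫⁻ k, T k) = I * ∫⁻ l, u l * u l := by
    have hswap : (∫⁻ k, ∫⁻ l, H (k - l) * (u l * u l)) =
        ∫⁻ l, ∫⁻ k, H (k - l) * (u l * u l) := by
      apply lintegral_lintegral_swap
      exact ((hHmeas.comp (measurable_fst.sub measurable_snd)).aemeasurable).mul
        (((hum.mul hum)).comp_quasiMeasurePreserving Measure.quasiMeasurePreserving_snd)
    rw [hT] at *
    rw [hswap]
    have : ∀ l : ℝ, (∫⁻ k, H (k - l) * (u l * u l)) = I * (u l * u l) := by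
      intro l
      rw [lintegral_mul_const' _ _ (ENNReal.mul_ne_top ENNReal.ofReal_ne_top
        ENNReal.ofReal_ne_top), lintegral_sub_right_eq_self H l, ← hI, mul_comm]
    rw [lintegral_congr this]
    exact lintegral_const_mul' _ _ hIlt.ne
  have huu : ∀ l : ℝ, u l * u l = ENNReal.ofReal ((1 + |l| ^ 2) ^ (σ - 1) * ‖g l‖ ^ 2) := by
    intro l
    rw [hu, ← ENNReal.ofReal_mul (by positivity)]
    congr 1
    rw [sq_abs,
      show (1 + l ^ 2) ^ ((σ - 1) / 2) * ‖g l‖ * ((1 + l ^ 2) ^ ((σ - 1) / 2) * ‖g l‖)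
        = ((1 + l ^ 2) ^ ((σ - 1) / 2) * (1 + l ^ 2) ^ ((σ - 1) / 2)) * ‖g l‖ ^ 2 by ring,
      ← Real.rpow_add (by positivity : (0:ℝ) < 1 + l ^ 2),
      show (σ - 1) / 2 + (σ - 1) / 2 = σ - 1 by ring]
  calc (∫⁻ k : ℝ, ENNReal.ofReal ((1 + |k| ^ 2) ^ σ *
      ‖∫ l : ℝ, g l / (((1 + |k - l| ^ n) * (1 + |l|) : ℝ) : ℂ)‖ ^ 2))
      ≤ ∫⁻ k, I * T k := lintegral_mono fun k => (step1 k).trans (step2 k)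
    _ = I * ∫⁻ k, T k := lintegral_const_mul' _ _ hIlt.ne
    _ = (I * I) * ∫⁻ l, u l * u l := by rw [hTint]; ring
    _ = (I * I) * ∫⁻ l, ENNReal.ofReal ((1 + |l| ^ 2) ^ (σ - 1) * ‖g l‖ ^ 2) := by
        rw [lintegral_congr huu]
    _ ≤ ENNReal.ofReal (I.toReal * I.toReal + 1) *
        ((∫⁻ x : ℝ, ENNReal.ofReal (‖g x‖ ^ 2)) +
          ∫⁻ l : ℝ, ENNReal.ofReal ((1 + |l| ^ 2) ^ (σ - 1) * ‖g l‖ ^ 2)) := by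
        refine mul_le_mul' ?_ le_add_self
        have hII : I * I = ENNReal.ofReal (I.toReal * I.toReal) := by
          rw [ENNReal.ofReal_mul ENNReal.toReal_nonneg, ENNReal.ofReal_toReal hIlt.ne]
        rw [hII]
        exact ENNReal.ofReal_le_ofReal (by linarith)
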